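/- Let k ≥ 3, let ε ∈ {−1, +1}ᵏ, let V ⊆ ℚᵏ be a ℚ-subspace with dim_ℚ V = k − 2, and let y ∈ ℝᵏ have all entries nonzero. Suppose that every w ∈ V satisfies both Σᵢ wᵢ yᵢ = 0 and Σᵢ wᵢ εᵢ yᵢ = 0. Then for any indices i, j, l with εᵢ = εⱼ and ε_l = −εᵢ, there exists q ∈ ℚ with yᵢ = q·yⱼ; that is, any two coordinates of y whose ε-signs agree have a rational ratio. -/

import Mathlib

lemma ratio_lemma (a b c d : ℝ) (p1 p2 q1 q2 r1 r2 : ℚ)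
    (hl : a * (r1 : ℝ) + b * (r2 : ℝ) = 0)
    (hl' : c * (r1 : ℝ) + d * (r2 : ℝ) ≠ 0)
    (hj : a * (q1 : ℝ) + b * (q2 : ℝ) ≠ 0) :
    ∃ q : ℚ, a * (p1 : ℝ) + b * (p2 : ℝ) = (q : ℝ) * (a * (q1 : ℝ) + b * (q2 : ℝ)) := by
  have hr : r1 ≠ 0 ∨ r2 ≠ 0 := by
    by_contra h
    push_neg at h
    obtain ⟨h1, h2⟩ := h
    simp [h1, h2] at hl'
  rcases hr with hr1 | hr2
  · have hr1' : (r1 : ℝ) ≠ 0 := by exact_mod_cast hr1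
    have ha : a = -b * (r2 : ℝ) / (r1 : ℝ) := by
      field_simp
      linarith
    have hsq : (q2 * r1 - r2 * q1 : ℚ) ≠ 0 := by
      intro h0
      apply hj
      have h0' : (q2 : ℝ) * r1 - (r2 : ℝ) * q1 = 0 := by exact_mod_cast congrArg (Rat.cast : ℚ → ℝ) h0
      rw [ha]
      field_simp
      linear_combination b * h0'
    refine ⟨(p2 * r1 - r2 * p1) / (q2 * r1 - r2 * q1), ?_⟩
    have hsq' : ((q2 : ℝ) * r1 - (r2 : ℝ) * q1) ≠ 0 := by
      intro h0; exact hsq (by exact_mod_cast h0)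
    rw [ha]
    push_cast
    rw [div_mul_eq_mul_div ((p2 : ℝ) * r1 - r2 * p1), eq_div_iff hsq']
    field_simp
    ring
  · have hr2' : (r2 : ℝ) ≠ 0 := by exact_mod_cast hr2
    have hbb : b = -a * (r1 : ℝ) / (r2 : ℝ) := by
      field_simp
      linarith
    have hsq : (q1 * r2 - r1 * q2 : ℚ) ≠ 0 := by
      intro h0
      apply hj
      have h0' : (q1 : ℝ) * r2 - (r1 : ℝ) * q2 = 0 := by exact_mod_cast congrArg (Rat.cast : ℚ → ℝ) h0
      rw [hbb]
      field_simp
      linear_combination a * h0'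
    refine ⟨(p1 * r2 - r1 * p2) / (q1 * r2 - r1 * q2), ?_⟩
    have hsq' : ((q1 : ℝ) * r2 - (r1 : ℝ) * q2) ≠ 0 := by
      intro h0; exact hsq (by exact_mod_cast h0)
    rw [hbb]
    push_cast
    rw [div_mul_eq_mul_div ((p1 : ℝ) * r2 - r1 * p2), eq_div_iff hsq']
    field_simp
    ring

/-- The ℚ-linear pairing functional `w ↦ ∑ i, wᵢ zᵢ`. -/
def pairing {k : ℕ} (z : Fin k → ℝ) : (Fin k → ℚ) →ₗ[ℚ] ℝ where
  toFun w := ∑ i, (w i : ℝ) * z i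
  map_add' w w' := by
    simp [add_mul, Finset.sum_add_distrib]
  map_smul' q w := by
    simp only [Pi.smul_apply, smul_eq_mul, RingHom.id_apply, Rat.smul_def, Finset.mul_sum]
    congr 1
    ext i
    push_cast
    ring

lemma pairing_single {k : ℕ} (z : Fin k → ℝ) (i : Fin k) :
    pairing z (Pi.single i 1) = z i := by
  simp only [pairing, LinearMap.coe_mk, AddHom.coe_mk]
  rw [Finset.sum_eq_single i]
  · simp
  · intro b _ hb
    simp [Pi.single_apply, hb]
  · simp

/-- If a real vector annihilates a rational subspace, it is a real linear
combination of the rational vectors coming from a basis of the quotient. -/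
lemma rep_lemma {k : ℕ} (V : Submodule ℚ (Fin k → ℚ))
    (B : Module.Basis (Fin 2) ℚ ((Fin k → ℚ) ⧸ V))
    (z : Fin k → ℝ) (hz : ∀ w ∈ V, ∑ i, (w i : ℝ) * z i = 0) :
    ∃ a b : ℝ, ∀ i, z i =
      a * ((B.repr (V.mkQ (Pi.single i 1)) 0 : ℚ) : ℝ)
      + b * ((B.repr (V.mkQ (Pi.single i 1)) 1 : ℚ) : ℝ) := by
  have hker : V ≤ LinearMap.ker (pairing z) := by
    intro w hw
    simpa [pairing] using hz w hw
  set ψ := V.liftQ (pairing z) hker with hψ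
  refine ⟨ψ (B 0), ψ (B 1), fun i => ?_⟩
  have h1 : ψ (V.mkQ (Pi.single i 1)) = pairing z (Pi.single i 1) :=
    Submodule.liftQ_apply V (pairing z) (Pi.single i 1)
  have h2 : z i = ψ (V.mkQ (Pi.single i 1)) := by
    rw [h1, pairing_single]
  rw [h2]
  conv_lhs => rw [← B.sum_repr (V.mkQ (Pi.single i 1))]
  rw [map_sum, Fin.sum_univ_two]
  simp [Rat.smul_def, mul_comm]

/-- Let `k ≥ 3`, `ε ∈ {−1,+1}ᵏ`, `V ⊆ ℚᵏ` a ℚ-subspace of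
dimension `k − 2`, and `y ∈ ℝᵏ` with all entries nonzero.  If every `w ∈ V`
satisfies `Σᵢ wᵢ yᵢ = 0` and `Σᵢ wᵢ εᵢ yᵢ = 0`, then for any indices `i, j, l`
with `εᵢ = εⱼ` and `ε_l = −εᵢ`, there exists `q ∈ ℚ` with `yᵢ = q yⱼ`. -/
theorem stmt3 (k : ℕ) (hk : 3 ≤ k)
    (ε : Fin k → ℝ) (hε : ∀ i, ε i = 1 ∨ ε i = -1)
    (V : Submodule ℚ (Fin k → ℚ)) (hV : Module.finrank ℚ V = k - 2)
    (y : Fin k → ℝ) (hy : ∀ i, y i ≠ 0)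
    (h1 : ∀ w ∈ V, ∑ i, (w i : ℝ) * y i = 0)
    (h2 : ∀ w ∈ V, ∑ i, (w i : ℝ) * ε i * y i = 0) :
    ∀ i j l : Fin k, ε i = ε j → ε l = -ε i → ∃ q : ℚ, y i = (q : ℝ) * y j := by
  have hq : Module.finrank ℚ ((Fin k → ℚ) ⧸ V) = 2 := by
    have := Submodule.finrank_quotient_add_finrank V
    have hpi : Module.finrank ℚ (Fin k → ℚ) = k := by simp
    omega
  obtain ⟨B⟩ : Nonempty (Module.Basis (Fin 2) ℚ ((Fin k → ℚ) ⧸ V)) :=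
    ⟨Module.finBasisOfFinrankEq ℚ _ hq⟩
  obtain ⟨a1, a2, hA⟩ := rep_lemma V B y h1
  obtain ⟨b1, b2, hB⟩ := rep_lemma V B (fun i => ε i * y i) (by
    intro w hwv
    simpa [mul_assoc] using h2 w hwv)
  set w : Fin 2 → Fin k → ℚ := fun t i => B.repr (V.mkQ (Pi.single i 1)) t with hw
  intro i j l hij hl
  have hu : ∀ t, y t + ε t * y t = (a1 + b1) * (w 0 t : ℝ) + (a2 + b2) * (w 1 t : ℝ) := by
    intro t
    simp only [hw]
    rw [hB t, hA t]
    ring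
  have hv : ∀ t, y t - ε t * y t = (a1 - b1) * (w 0 t : ℝ) + (a2 - b2) * (w 1 t : ℝ) := by
    intro t
    simp only [hw]
    rw [hB t, hA t]
    ring
  rcases hε i with hi | hi
  · have hj' : ε j = 1 := by rw [← hij]; exact hi
    have hl' : ε l = -1 := by rw [hl, hi]
    have hul : (a1 + b1) * (w 0 l : ℝ) + (a2 + b2) * (w 1 l : ℝ) = 0 := by
      rw [← hu l, hl']; ring
    have hvl : (a1 - b1) * (w 0 l : ℝ) + (a2 - b2) * (w 1 l : ℝ) ≠ 0 := by
      rw [← hv l, hl']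
      have := hy l; intro h; apply this; linarith
    have huj : (a1 + b1) * (w 0 j : ℝ) + (a2 + b2) * (w 1 j : ℝ) ≠ 0 := by
      rw [← hu j, hj']
      have := hy j; intro h; apply this; linarith
    obtain ⟨q, hq'⟩ := ratio_lemma (a1 + b1) (a2 + b2) (a1 - b1) (a2 - b2)
      (w 0 i) (w 1 i) (w 0 j) (w 1 j) (w 0 l) (w 1 l) hul hvl huj
    refine ⟨q, ?_⟩
    rw [← hu i, ← hu j, hi, hj'] at hq'
    linarith
  · have hj' : ε j = -1 := by rw [← hij]; exact hi
    have hl' : ε l = 1 := by rw [hl, hi]; ring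
    have hvl : (a1 - b1) * (w 0 l : ℝ) + (a2 - b2) * (w 1 l : ℝ) = 0 := by
      rw [← hv l, hl']; ring
    have hul : (a1 + b1) * (w 0 l : ℝ) + (a2 + b2) * (w 1 l : ℝ) ≠ 0 := by
      rw [← hu l, hl']
      have := hy l; intro h; apply this; linarith
    have hvj : (a1 - b1) * (w 0 j : ℝ) + (a2 - b2) * (w 1 j : ℝ) ≠ 0 := by
      rw [← hv j, hj']
      have := hy j; intro h; apply this; linarith
    obtain ⟨q, hq'⟩ := ratio_lemma (a1 - b1) (a2 - b2) (a1 + b1) (a2 + b2)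
      (w 0 i) (w 1 i) (w 0 j) (w 1 j) (w 0 l) (w 1 l) hvl hul hvj
    refine ⟨q, ?_⟩
    rw [← hv i, ← hv j, hi, hj'] at hq'
    linarith
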